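/- Let S be a metric semigroup satisfying Reiter's condition. Then S is amenable, i.e. there exists a norm-one positive linear functional φ : LUC(S) → ℂ satisfying φ(δ_a * f) = φ(f) for all a ∈ S and all f ∈ LUC(S). -/

import Mathlib

open MeasureTheory BoundedContinuousFunction Filter Topology
open scoped ENNReal

/-- The total variation norm `‖μ - ν‖` of the difference of two (finite) measures. -/
noncomputable def tvDist {α : Type*} [MeasurableSpace α] (μ ν : Measure α) : ℝ≥0∞ :=
  (⨆ (E : Set α) (_ : MeasurableSet E), (μ E - ν E)) +
    ⨆ (E : Set α) (_ : MeasurableSet E), (ν E - μ E)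

/-- The left translate `δ_a * f` of a bounded continuous function `f`,
`(δ_a * f)(x) = f (a * x)`. -/
noncomputable def lTrans {S : Type*} [Semigroup S] [MetricSpace S] [ContinuousMul S]
    (a : S) (f : S →ᵇ ℂ) : S →ᵇ ℂ :=
  f.compContinuous ⟨fun x => a * x, continuous_const.mul continuous_id⟩

/-- `LUC S` is the space of bounded (left) uniformly continuous functions on `S`. -/
noncomputable def LUC (S : Type*) [Semigroup S] [MetricSpace S] [ContinuousMul S] :
    Submodule ℂ (S →ᵇ ℂ) where
  carrier := {f | Continuous fun a : S => lTrans a f}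
  add_mem' := by
    intro f g hf hg
    show Continuous fun a : S => lTrans a (f + g)
    have h : (fun a : S => lTrans a (f + g)) = fun a : S => lTrans a f + lTrans a g := by
      funext a; ext x; simp [lTrans]
    rw [h]; exact hf.add hg
  zero_mem' := by
    show Continuous fun a : S => lTrans a (0 : S →ᵇ ℂ)
    have h : (fun a : S => lTrans a (0 : S →ᵇ ℂ)) = fun _ => (0 : S →ᵇ ℂ) := by
      funext a; ext x; simp [lTrans]
    rw [h]; exact continuous_const
  smul_mem' := by
    intro c f hf
    show Continuous fun a : S => lTrans a (c • f)
    have h : (fun a : S => lTrans a (c • f)) = fun a : S => c • lTrans a f := by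
      funext a; ext x; simp [lTrans]
    rw [h]; exact hf.const_smul c

/-- The left translate `δ_a * f` of an element of `LUC S`, as an element of `LUC S`. -/
noncomputable def lTransL {S : Type*} [Semigroup S] [MetricSpace S] [ContinuousMul S]
    (a : S) (f : LUC S) : LUC S :=
  ⟨lTrans a f.1, by
    show Continuous fun b : S => lTrans b (lTrans a f.1)
    have h : (fun b : S => lTrans b (lTrans a f.1)) = fun b : S => lTrans (a * b) f.1 := by
      funext b; ext x; simp [lTrans, mul_assoc]
    rw [h]; exact f.2.comp (continuous_mul_left a)⟩

/-- Reiter's condition for a topological semigroup: for every `ε > 0` and compact `K ⊆ S`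
there is a compactly supported Borel probability measure `θ` on `S` with
`‖θ - δ_s * θ‖ < ε` for all `s ∈ K`. -/
def ReiterCond (S : Type*) [Semigroup S] [MetricSpace S] [ContinuousMul S]
    [MeasurableSpace S] : Prop :=
  ∀ ε : ℝ, 0 < ε → ∀ K : Set S, IsCompact K →
    ∃ θ : Measure S, IsProbabilityMeasure θ ∧ (∃ C : Set S, IsCompact C ∧ θ Cᶜ = 0) ∧
      ∀ s ∈ K, tvDist θ (Measure.map (fun y => s * y) θ) < ENNReal.ofReal ε

lemma lintegral_le_of_tv {α : Type*} [MeasurableSpace α] {μ ν : Measure α}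
    (g : α → ℝ) (hg : Measurable g) (h0 : ∀ x, 0 ≤ g x) {M : ℝ} (hM : ∀ x, g x ≤ M) :
    ∫⁻ x, ENNReal.ofReal (g x) ∂μ ≤ ∫⁻ x, ENNReal.ofReal (g x) ∂ν +
      ENNReal.ofReal M * ⨆ (E : Set α) (_ : MeasurableSet E), (μ E - ν E) := by
  set D := ⨆ (E : Set α) (_ : MeasurableSet E), (μ E - ν E) with hD
  rw [lintegral_eq_lintegral_meas_lt μ (ae_of_all _ h0) hg.aemeasurable,
      lintegral_eq_lintegral_meas_lt ν (ae_of_all _ h0) hg.aemeasurable]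
  have key : ∀ t ∈ Set.Ioi (0:ℝ), μ {a | t < g a} ≤ ν {a | t < g a}
      + (Set.Ioc (0:ℝ) M).indicator (fun _ => D) t := by
    intro t ht
    by_cases htM : t ≤ M
    · have hmem : t ∈ Set.Ioc (0:ℝ) M := ⟨ht, htM⟩
      rw [Set.indicator_of_mem hmem]
      have hEm : MeasurableSet {a | t < g a} := by
        have : {a | t < g a} = g ⁻¹' Set.Ioi t := rfl
        rw [this]; exact hg measurableSet_Ioi
      have h1 : μ {a | t < g a} - ν {a | t < g a} ≤ D := by
        rw [hD]
        exact le_iSup₂ (f := fun E (_ : MeasurableSet E) => μ E - ν E) _ hEm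
      calc μ {a | t < g a} ≤ ν {a | t < g a} + (μ {a | t < g a} - ν {a | t < g a}) :=
            le_add_tsub
        _ ≤ _ := add_le_add_right h1 _
    · have hempty : {a | t < g a} = ∅ := by
        ext a; simp only [Set.mem_setOf_eq, Set.mem_empty_iff_false, iff_false, not_lt]
        exact (hM a).trans (le_of_not_ge htM)
      rw [hempty, measure_empty]
      exact bot_le
  calc ∫⁻ t in Set.Ioi (0:ℝ), μ {a | t < g a}
      ≤ ∫⁻ t in Set.Ioi (0:ℝ), (ν {a | t < g a}
        + (Set.Ioc (0:ℝ) M).indicator (fun _ => D) t) := by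
        refine lintegral_mono_ae ?_
        exact (ae_restrict_mem measurableSet_Ioi).mono key
    _ = (∫⁻ t in Set.Ioi (0:ℝ), ν {a | t < g a})
        + ∫⁻ t in Set.Ioi (0:ℝ), (Set.Ioc (0:ℝ) M).indicator (fun _ => D) t :=
        lintegral_add_right _ (measurable_const.indicator measurableSet_Ioc)
    _ ≤ _ := by
        refine add_le_add_right ?_ _
        rw [lintegral_indicator measurableSet_Ioc, setLIntegral_const,
          Measure.restrict_apply measurableSet_Ioc]
        have : Set.Ioc (0:ℝ) M ∩ Set.Ioi 0 = Set.Ioc (0:ℝ) M :=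
          Set.inter_eq_left.2 Set.Ioc_subset_Ioi_self
        rw [this, Real.volume_Ioc, sub_zero, mul_comm]

lemma real_integral_diff_le {α : Type*} [MeasurableSpace α] {μ ν : Measure α}
    [IsProbabilityMeasure μ] [IsProbabilityMeasure ν]
    (g : α → ℝ) (hg : Measurable g) {c : ℝ} (hc : 0 ≤ c) (hb : ∀ x, |g x| ≤ c)
    {t : ℝ} (ht0 : 0 ≤ t)
    (hDt : (⨆ (E : Set α) (_ : MeasurableSet E), (μ E - ν E)) ≤ ENNReal.ofReal t) :
    ∫ x, g x ∂μ - ∫ x, g x ∂ν ≤ 2 * c * t := by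
  set h : α → ℝ := fun x => g x + c with hh
  have h0 : ∀ x, 0 ≤ h x := fun x => by
    have := (abs_le.1 (hb x)).1; simp only [hh]; linarith
  have hM : ∀ x, h x ≤ 2 * c := fun x => by
    have := (abs_le.1 (hb x)).2; simp only [hh]; linarith
  have hmeas : Measurable h := hg.add_const c
  have A := lintegral_le_of_tv (μ := μ) (ν := ν) h hmeas h0 hM
  have bnd : ∀ (ρ : Measure α), IsProbabilityMeasure ρ →
      ∫⁻ x, ENNReal.ofReal (h x) ∂ρ ≤ ENNReal.ofReal (2 * c) := by
    intro ρ hρ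
    calc ∫⁻ x, ENNReal.ofReal (h x) ∂ρ ≤ ∫⁻ _, ENNReal.ofReal (2 * c) ∂ρ :=
          lintegral_mono fun x => ENNReal.ofReal_le_ofReal (hM x)
      _ = ENNReal.ofReal (2 * c) := by simp [lintegral_const]
  have finμ : ∫⁻ x, ENNReal.ofReal (h x) ∂μ ≠ ∞ :=
    ((bnd μ inferInstance).trans_lt ENNReal.ofReal_lt_top).ne
  have finν : ∫⁻ x, ENNReal.ofReal (h x) ∂ν ≠ ∞ :=
    ((bnd ν inferInstance).trans_lt ENNReal.ofReal_lt_top).ne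
  have A2 : ∫⁻ x, ENNReal.ofReal (h x) ∂μ ≤
      ∫⁻ x, ENNReal.ofReal (h x) ∂ν + ENNReal.ofReal (2 * c * t) := by
    refine A.trans (add_le_add_right ?_ _)
    calc ENNReal.ofReal (2 * c) * (⨆ (E : Set α) (_ : MeasurableSet E), (μ E - ν E))
        ≤ ENNReal.ofReal (2 * c) * ENNReal.ofReal t := mul_le_mul_right hDt _
      _ = ENNReal.ofReal (2 * c * t) := (ENNReal.ofReal_mul (by positivity)).symm
  have A3 : (∫⁻ x, ENNReal.ofReal (h x) ∂μ).toReal ≤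
      (∫⁻ x, ENNReal.ofReal (h x) ∂ν).toReal + 2 * c * t := by
    have := ENNReal.toReal_mono (by
      exact ENNReal.add_ne_top.2 ⟨finν, ENNReal.ofReal_ne_top⟩) A2
    rwa [ENNReal.toReal_add finν ENNReal.ofReal_ne_top,
      ENNReal.toReal_ofReal (by positivity)] at this
  have hint : ∀ (ρ : Measure α), IsProbabilityMeasure ρ →
      ∫ x, h x ∂ρ = (∫⁻ x, ENNReal.ofReal (h x) ∂ρ).toReal := fun ρ hρ =>
    integral_eq_lintegral_of_nonneg_ae (ae_of_all _ h0) hmeas.aestronglyMeasurable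
  have hgint : ∀ (ρ : Measure α), IsProbabilityMeasure ρ → Integrable g ρ := by
    intro ρ hρ
    exact (integrable_const c).mono' hg.aestronglyMeasurable (ae_of_all _ fun x => by
      simpa using hb x)
  have hsplit : ∀ (ρ : Measure α), IsProbabilityMeasure ρ →
      ∫ x, h x ∂ρ = (∫ x, g x ∂ρ) + c := by
    intro ρ hρ
    rw [hh]
    rw [integral_add (hgint ρ hρ) (integrable_const c)]
    simp
  have e1 := hint μ inferInstance
  have e2 := hint ν inferInstance
  have s1 := hsplit μ inferInstance
  have s2 := hsplit ν inferInstance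
  rw [s1] at e1; rw [s2] at e2
  linarith [A3, e1, e2]

lemma complex_integral_tv {α : Type*} [MeasurableSpace α] {μ ν : Measure α}
    [IsProbabilityMeasure μ] [IsProbabilityMeasure ν]
    (f : α → ℂ) (hf : Measurable f) {c : ℝ} (hc : 0 ≤ c) (hb : ∀ x, ‖f x‖ ≤ c)
    {t : ℝ} (ht0 : 0 ≤ t) (htv : tvDist μ ν ≤ ENNReal.ofReal t) :
    ‖(∫ x, f x ∂μ) - ∫ x, f x ∂ν‖ ≤ 4 * c * t := by
  have hD1 : (⨆ (E : Set α) (_ : MeasurableSet E), (μ E - ν E)) ≤ ENNReal.ofReal t :=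
    le_trans le_self_add htv
  have hD2 : (⨆ (E : Set α) (_ : MeasurableSet E), (ν E - μ E)) ≤ ENNReal.ofReal t :=
    le_trans le_add_self htv
  have hfi : ∀ (ρ : Measure α), IsProbabilityMeasure ρ → Integrable f ρ := by
    intro ρ hρ
    exact (integrable_const c).mono' hf.aestronglyMeasurable (ae_of_all _ hb)
  have hre : ∀ (ρ : Measure α), IsProbabilityMeasure ρ →
      (∫ x, f x ∂ρ).re = ∫ x, (f x).re ∂ρ := by
    intro ρ hρ
    have := integral_re (μ := ρ) (hfi ρ hρ)
    simpa using this.symm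
  have him : ∀ (ρ : Measure α), IsProbabilityMeasure ρ →
      (∫ x, f x ∂ρ).im = ∫ x, (f x).im ∂ρ := by
    intro ρ hρ
    have := integral_im (μ := ρ) (hfi ρ hρ)
    simpa using this.symm
  have hremeas : Measurable fun x => (f x).re := Complex.measurable_re.comp hf
  have himmeas : Measurable fun x => (f x).im := Complex.measurable_im.comp hf
  have hreb : ∀ x, |(f x).re| ≤ c := fun x =>
    (Complex.abs_re_le_norm (f x)).trans (hb x)
  have himb : ∀ x, |(f x).im| ≤ c := fun x =>
    (Complex.abs_im_le_norm (f x)).trans (hb x)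
  have r1 := real_integral_diff_le (μ := μ) (ν := ν) _ hremeas hc hreb ht0 hD1
  have r2 := real_integral_diff_le (μ := ν) (ν := μ) _ hremeas hc hreb ht0 hD2
  have i1 := real_integral_diff_le (μ := μ) (ν := ν) _ himmeas hc himb ht0 hD1
  have i2 := real_integral_diff_le (μ := ν) (ν := μ) _ himmeas hc himb ht0 hD2
  set z := (∫ x, f x ∂μ) - ∫ x, f x ∂ν with hz
  have hzre : z.re = (∫ x, (f x).re ∂μ) - ∫ x, (f x).re ∂ν := by
    rw [hz, Complex.sub_re, hre μ inferInstance, hre ν inferInstance]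
  have hzim : z.im = (∫ x, (f x).im ∂μ) - ∫ x, (f x).im ∂ν := by
    rw [hz, Complex.sub_im, him μ inferInstance, him ν inferInstance]
  have habs : ‖z‖ ≤ |z.re| + |z.im| := Complex.norm_le_abs_re_add_abs_im z
  have h1 : |z.re| ≤ 2 * c * t := by rw [hzre]; rw [abs_le]; constructor <;> linarith
  have h2 : |z.im| ≤ 2 * c * t := by rw [hzim]; rw [abs_le]; constructor <;> linarith
  calc ‖z‖ ≤ |z.re| + |z.im| := habs
    _ ≤ 2 * c * t + (2 * c * t) := add_le_add h1 h2
    _ = 4 * c * t := by ring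


section AuxReiter

open Set

variable {S : Type*} [Semigroup S] [MetricSpace S] [ContinuousMul S]

/-- Index type for the Reiter net: pairs of a positive tolerance and a compact set. -/
def ReiterIdx (S : Type*) [TopologicalSpace S] : Type _ :=
  {p : ℝ × Set S // 0 < p.1 ∧ IsCompact p.2}

instance {S : Type*} [TopologicalSpace S] : Nonempty (ReiterIdx S) :=
  ⟨⟨(1, ∅), one_pos, isCompact_empty⟩⟩

instance {S : Type*} [TopologicalSpace S] : SemilatticeSup (ReiterIdx S) where
  le p q := q.1.1 ≤ p.1.1 ∧ p.1.2 ⊆ q.1.2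
  le_refl p := ⟨le_refl _, subset_rfl⟩
  le_trans p q r h h' := ⟨h'.1.trans h.1, h.2.trans h'.2⟩
  le_antisymm p q h h' :=
    Subtype.ext (Prod.ext (le_antisymm h'.1 h.1) (subset_antisymm h.2 h'.2))
  sup p q := ⟨(min p.1.1 q.1.1, p.1.2 ∪ q.1.2), lt_min p.2.1 q.2.1, p.2.2.union q.2.2⟩
  le_sup_left p q := ⟨min_le_left _ _, Set.subset_union_left⟩
  le_sup_right p q := ⟨min_le_right _ _, Set.subset_union_right⟩
  sup_le p q r h h' := ⟨le_min h.1 h'.1, Set.union_subset h.2 h'.2⟩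

variable [MeasurableSpace S] [OpensMeasurableSpace S]

set_option maxHeartbeats 1000000 in
/-- Integration against a probability measure as a continuous linear functional on `LUC S`. -/
noncomputable def intLUC (μ : Measure S) [IsProbabilityMeasure μ] : LUC S →L[ℂ] ℂ :=
  LinearMap.mkContinuous
    { toFun := fun f => ∫ x, (f : S →ᵇ ℂ) x ∂μ
      map_add' := fun f g => by
        show (∫ x, ((f + g : LUC S) : S →ᵇ ℂ) x ∂μ)
            = (∫ x, (f : S →ᵇ ℂ) x ∂μ) + ∫ x, (g : S →ᵇ ℂ) x ∂μ
        have h : (fun x => ((f + g : LUC S) : S →ᵇ ℂ) x)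
            = fun x => (f : S →ᵇ ℂ) x + (g : S →ᵇ ℂ) x := by
          funext x; simp
        rw [show (∫ x, ((f + g : LUC S) : S →ᵇ ℂ) x ∂μ)
            = ∫ x, ((f : S →ᵇ ℂ) x + (g : S →ᵇ ℂ) x) ∂μ from congrArg _ h]
        exact integral_add ((f : S →ᵇ ℂ).integrable μ) ((g : S →ᵇ ℂ).integrable μ)
      map_smul' := fun c f => by
        show (∫ x, ((c • f : LUC S) : S →ᵇ ℂ) x ∂μ) = c • ∫ x, (f : S →ᵇ ℂ) x ∂μ
        have h : (fun x => ((c • f : LUC S) : S →ᵇ ℂ) x)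
            = fun x => c • (f : S →ᵇ ℂ) x := by
          funext x; simp
        rw [show (∫ x, ((c • f : LUC S) : S →ᵇ ℂ) x ∂μ)
            = ∫ x, c • (f : S →ᵇ ℂ) x ∂μ from congrArg _ h]
        exact integral_smul c _ }
    1
    (fun f => by
      have : ‖∫ x, (f : S →ᵇ ℂ) x ∂μ‖ ≤ ‖(f : S →ᵇ ℂ)‖ * (μ Set.univ).toReal :=
        norm_integral_le_of_norm_le_const (ae_of_all _ fun x => (f : S →ᵇ ℂ).norm_coe_le_norm x)
      simpa [measure_univ, one_mul] using this)

lemma intLUC_apply (μ : Measure S) [IsProbabilityMeasure μ] (f : LUC S) :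
    intLUC μ f = ∫ x, (f : S →ᵇ ℂ) x ∂μ := rfl

lemma norm_intLUC_le (μ : Measure S) [IsProbabilityMeasure μ] : ‖intLUC μ‖ ≤ 1 :=
  LinearMap.mkContinuous_norm_le _ zero_le_one _

/-- The constant function `1` is in `LUC S`. -/
lemma one_mem_LUC : (1 : S →ᵇ ℂ) ∈ LUC S := by
  show Continuous fun a : S => lTrans a (1 : S →ᵇ ℂ)
  have h : (fun a : S => lTrans a (1 : S →ᵇ ℂ)) = fun _ => (1 : S →ᵇ ℂ) := by
    funext a; ext x; simp [lTrans]
  rw [h]; exact continuous_const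

end AuxReiter

set_option maxHeartbeats 1000000 in
/-- **Reiter's condition implies amenability for metric semigroups.** -/
theorem reiter_implies_amenable_metric_semigroup
    {S : Type*} [Semigroup S] [MetricSpace S] [ContinuousMul S]
    [MeasurableSpace S] [BorelSpace S]
    (hR : ReiterCond S) :
    ∃ φ : LUC S →L[ℂ] ℂ, ‖φ‖ = 1 ∧
      (∀ f : LUC S, (∀ x : S, ∃ r : ℝ, 0 ≤ r ∧ (f : S →ᵇ ℂ) x = r) →
        ∃ r : ℝ, 0 ≤ r ∧ φ f = r) ∧
      (∀ (a : S) (f : LUC S), φ (lTransL a f) = φ f) := by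
  have hSne : Nonempty S := by
    by_contra h
    obtain ⟨θ, hθ, -, -⟩ := hR 1 one_pos ∅ isCompact_empty
    have h1 : θ Set.univ = 1 := hθ.measure_univ
    rw [Set.univ_eq_empty_iff.2 (not_nonempty_iff.1 h)] at h1
    simp at h1
  choose θm hprob hsupp htv using fun i : ReiterIdx S => hR i.1.1 i.2.1 i.1.2 i.2.2
  set ψ : ReiterIdx S → WeakDual ℂ (LUC S) := fun i =>
    StrongDual.toWeakDual (@intLUC S _ _ _ _ _ (θm i) (hprob i)) with hψ
  set s : Set (WeakDual ℂ (LUC S)) := ⇑WeakDual.toStrongDual ⁻¹' Metric.closedBall 0 1 with hsdef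
  have hψs : ∀ i, ψ i ∈ s := by
    intro i
    show WeakDual.toStrongDual (ψ i) ∈ Metric.closedBall 0 1
    rw [mem_closedBall_zero_iff (E := StrongDual ℂ (LUC S))]
    exact @norm_intLUC_le S _ _ _ _ _ (θm i) (hprob i)
  have hs : IsCompact s := WeakDual.isCompact_closedBall 0 1
  set U : Ultrafilter (ReiterIdx S) := Ultrafilter.of atTop with hU
  have hUle : (U : Filter (ReiterIdx S)) ≤ atTop := Ultrafilter.of_le _
  have hmaple : (U.map ψ : Filter (WeakDual ℂ (LUC S))) ≤ 𝓟 s := by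
    rw [Filter.le_principal_iff]
    exact Filter.mem_map.2 (Filter.univ_mem' hψs)
  obtain ⟨φw, hφw_mem, hφw_le⟩ := hs.ultrafilter_le_nhds (U.map ψ) hmaple
  have hT : Filter.Tendsto ψ U (𝓝 φw) := hφw_le
  have hev : ∀ g : LUC S,
      Filter.Tendsto (fun i => ∫ x, (g : S →ᵇ ℂ) x ∂(θm i)) U (𝓝 (φw g)) := by
    intro g
    exact ((WeakDual.eval_continuous g).tendsto φw).comp hT
  refine ⟨WeakDual.toStrongDual φw, ?_, ?_, ?_⟩
  · -- norm 1
    have hone_mem : (1 : S →ᵇ ℂ) ∈ LUC S := one_mem_LUC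
    set one : LUC S := ⟨(1 : S →ᵇ ℂ), hone_mem⟩ with honedef
    have hone : φw one = 1 := by
      refine tendsto_nhds_unique (hev one) ?_
      have hconst : (fun i : ReiterIdx S => ∫ x, ((one : LUC S) : S →ᵇ ℂ) x ∂(θm i))
          = fun _ => (1 : ℂ) := by
        funext i
        haveI := hprob i
        show (∫ x, (1 : S →ᵇ ℂ) x ∂(θm i)) = 1
        simp
      rw [hconst]
      exact tendsto_const_nhds
    have hnorm_le : ‖WeakDual.toStrongDual φw‖ ≤ 1 := (mem_closedBall_zero_iff (E := StrongDual ℂ (LUC S))).1 hφw_mem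
    have honenorm : ‖one‖ = 1 := by
      show ‖((one : LUC S) : S →ᵇ ℂ)‖ = 1
      show ‖(1 : S →ᵇ ℂ)‖ = 1
      rw [show (1 : S →ᵇ ℂ) = BoundedContinuousFunction.const S (1 : ℂ) from rfl]
      simp
    have h1 : ‖(WeakDual.toStrongDual φw) one‖ ≤ ‖WeakDual.toStrongDual φw‖ * ‖one‖ :=
      (WeakDual.toStrongDual φw).le_opNorm one
    have h2 : (WeakDual.toStrongDual φw) one = 1 := hone
    rw [h2, honenorm, mul_one, norm_one] at h1
    exact le_antisymm hnorm_le h1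
  · -- positivity
    intro f hf
    set Cset : Set ℂ := Complex.re ⁻¹' Set.Ici 0 ∩ Complex.im ⁻¹' {0} with hCdef
    have hCclosed : IsClosed Cset :=
      (isClosed_Ici.preimage Complex.continuous_re).inter
        (isClosed_singleton.preimage Complex.continuous_im)
    have hmemC : ∀ i, (∫ x, (f : S →ᵇ ℂ) x ∂(θm i)) ∈ Cset := by
      intro i
      haveI := hprob i
      have hint : Integrable (fun x => (f : S →ᵇ ℂ) x) (θm i) :=
        (f : S →ᵇ ℂ).integrable (θm i)
      constructor
      · show (0:ℝ) ≤ (∫ x, (f : S →ᵇ ℂ) x ∂(θm i)).re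
        have hre := integral_re (μ := θm i) hint
        have : (∫ x, (f : S →ᵇ ℂ) x ∂(θm i)).re = ∫ x, ((f : S →ᵇ ℂ) x).re ∂(θm i) := by
          simpa using hre.symm
        rw [this]
        refine integral_nonneg fun x => ?_
        obtain ⟨r, hr0, hr⟩ := hf x
        rw [hr]
        simpa using hr0
      · show (∫ x, (f : S →ᵇ ℂ) x ∂(θm i)).im = 0
        have him := integral_im (μ := θm i) hint
        have h3 : (∫ x, (f : S →ᵇ ℂ) x ∂(θm i)).im = ∫ x, ((f : S →ᵇ ℂ) x).im ∂(θm i) := by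
          simpa using him.symm
        rw [h3]
        have h4 : ∀ x, ((f : S →ᵇ ℂ) x).im = 0 := by
          intro x
          obtain ⟨r, hr0, hr⟩ := hf x
          rw [hr]
          simp
        simp [h4]
    have hφC : φw f ∈ Cset :=
      hCclosed.mem_of_tendsto (hev f) (Filter.Eventually.of_forall hmemC)
    refine ⟨(φw f).re, hφC.1, ?_⟩
    show φw f = ((φw f).re : ℂ)
    have him0 : (φw f).im = 0 := hφC.2
    exact Complex.ext (by simp) (by simp [him0])
  · -- invariance
    intro a f
    have ha : Filter.Tendsto
        (fun i => (∫ x, ((lTransL a f : LUC S) : S →ᵇ ℂ) x ∂(θm i))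
          - ∫ x, (f : S →ᵇ ℂ) x ∂(θm i)) U (𝓝 0) := by
      rw [NormedAddCommGroup.tendsto_nhds_zero]
      intro δ hδ
      set c := ‖(f : S →ᵇ ℂ)‖ with hcdef
      have hc : (0:ℝ) ≤ c := norm_nonneg _
      set ε₀ := δ / (4 * c + 1) with hε₀def
      have hε₀ : 0 < ε₀ := div_pos hδ (by positivity)
      have hbound : 4 * c * ε₀ < δ := by
        have h1 : ε₀ * (4 * c + 1) = δ := div_mul_cancel₀ δ (by positivity)
        have h2 : 4 * c * ε₀ + ε₀ = δ := by linear_combination h1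
        linarith
      set i₀ : ReiterIdx S := ⟨(ε₀, {a}), hε₀, isCompact_singleton⟩ with hi₀def
      have hev' : ∀ᶠ i in (atTop : Filter (ReiterIdx S)), i₀ ≤ i :=
        Filter.eventually_ge_atTop i₀
      refine (hev'.filter_mono hUle).mono ?_
      intro i hi
      haveI := hprob i
      have haK : a ∈ i.1.2 := hi.2 rfl
      have htvi := htv i a haK
      have hεle : i.1.1 ≤ ε₀ := hi.1
      have htv2 : tvDist (θm i) (Measure.map (fun y => a * y) (θm i)) ≤ ENNReal.ofReal ε₀ :=
        le_trans htvi.le (ENNReal.ofReal_le_ofReal hεle)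
      haveI hmapP : IsProbabilityMeasure (Measure.map (fun y => a * y) (θm i)) :=
        Measure.isProbabilityMeasure_map ((continuous_mul_left a).measurable.aemeasurable)
      have hkey := complex_integral_tv (μ := θm i)
        (ν := Measure.map (fun y => a * y) (θm i))
        (fun x => (f : S →ᵇ ℂ) x) (f : S →ᵇ ℂ).continuous.measurable hc
        (fun x => (f : S →ᵇ ℂ).norm_coe_le_norm x) hε₀.le htv2
      have hmapint : (∫ x, (f : S →ᵇ ℂ) x ∂(Measure.map (fun y => a * y) (θm i)))
          = ∫ x, ((lTransL a f : LUC S) : S →ᵇ ℂ) x ∂(θm i) := by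
        rw [integral_map ((continuous_mul_left a).measurable.aemeasurable)
          (f : S →ᵇ ℂ).continuous.aestronglyMeasurable]
        rfl
      rw [hmapint] at hkey
      calc ‖(∫ x, ((lTransL a f : LUC S) : S →ᵇ ℂ) x ∂(θm i))
            - ∫ x, (f : S →ᵇ ℂ) x ∂(θm i)‖
          = ‖(∫ x, (f : S →ᵇ ℂ) x ∂(θm i))
            - ∫ x, ((lTransL a f : LUC S) : S →ᵇ ℂ) x ∂(θm i)‖ := norm_sub_rev _ _
        _ ≤ 4 * c * ε₀ := hkey
        _ < δ := hbound
    have h2 := ha.add (hev f)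
    rw [zero_add] at h2
    have h3 : (fun i => ((∫ x, ((lTransL a f : LUC S) : S →ᵇ ℂ) x ∂(θm i))
        - ∫ x, (f : S →ᵇ ℂ) x ∂(θm i)) + ∫ x, (f : S →ᵇ ℂ) x ∂(θm i))
        = fun i => ∫ x, ((lTransL a f : LUC S) : S →ᵇ ℂ) x ∂(θm i) := by
      funext i; ring
    rw [h3] at h2
    exact tendsto_nhds_unique (hev (lTransL a f)) h2
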